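/- Let Φ : M_m(ℝ) → M_n(ℝ) be transpose-preserving. If there exists p ∈ ℝ such that p C_Φ + (1-p) C_Φ^Γ is positive semidefinite, then Φ can be written as Φ(X) = Σⱼ Aⱼ X Aⱼᵀ + Ψ(X) where Ψ vanishes on all symmetric matrices; in particular Φ is positive. -/

import Mathlib

open Matrix Complex

noncomputable section

def vKron {α β : Type*} (v : α → ℝ) (w : β → ℝ) : α × β → ℝ := fun p => v p.1 * w p.2

def cKron {α β : Type*} (v : α → ℂ) (w : β → ℂ) : α × β → ℂ := fun p => v p.1 * w p.2

/-- Partial transpose on the second tensor factor. -/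
def pt {α β : Type*} (B : Matrix (α × β) (α × β) ℝ) : Matrix (α × β) (α × β) ℝ :=
  Matrix.of fun p q => B (p.1, q.2) (q.1, p.2)

/-- Values of the quadratic form of `B` on real unit product vectors. -/
def prodSet {α β : Type*} [Fintype α] [Fintype β] (B : Matrix (α × β) (α × β) ℝ) : Set ℝ :=
  {r | ∃ (v : α → ℝ) (w : β → ℝ), v ⬝ᵥ v = 1 ∧ w ⬝ᵥ w = 1 ∧
    r = vKron v w ⬝ᵥ B.mulVec (vKron v w)}

/-- The numerical range of a complex matrix. -/
def numRange {N : Type*} [Fintype N] (A : Matrix N N ℂ) : Set ℂ :=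
  {z | ∃ x : N → ℂ, star x ⬝ᵥ x = 1 ∧ z = star x ⬝ᵥ A.mulVec x}

/-- `W^{1+i}(B) = {c ∈ ℝ : c(1+i) ∈ W(B + iB^Γ)}`. -/
def W1i {α β : Type*} [Fintype α] [Fintype β] (B : Matrix (α × β) (α × β) ℝ) : Set ℝ :=
  {c | (c : ℂ) * (1 + Complex.I) ∈
    numRange (B.map (fun t => (t : ℂ)) + Complex.I • (pt B).map (fun t => (t : ℂ)))}

/-- The Choi matrix of a linear map `Φ : M_m(ℝ) → M_n(ℝ)`. -/
def choi {m n : ℕ} (Φ : Matrix (Fin m) (Fin m) ℝ →ₗ[ℝ] Matrix (Fin n) (Fin n) ℝ) :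
    Matrix (Fin m × Fin n) (Fin m × Fin n) ℝ :=
  Matrix.of fun p q => Φ (Matrix.single p.1 q.1 1) p.2 q.2

private lemma sum3_comm {ι κ γ M : Type*} [Fintype ι] [Fintype κ] [Fintype γ]
    [AddCommMonoid M] (g : ι → κ → γ → M) :
    ∑ i, ∑ k, ∑ j, g i k j = ∑ j, ∑ i, ∑ k, g i k j :=
  calc ∑ i, ∑ k, ∑ j, g i k j
      = ∑ i, ∑ j, ∑ k, g i k j := Finset.sum_congr rfl fun _ _ => Finset.sum_comm
    _ = ∑ j, ∑ i, ∑ k, g i k j := Finset.sum_comm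

theorem stmt15 {m n : ℕ} (Φ : Matrix (Fin m) (Fin m) ℝ →ₗ[ℝ] Matrix (Fin n) (Fin n) ℝ)
    (hΦ : ∀ X, Φ Xᵀ = (Φ X)ᵀ) (p : ℝ)
    (h : (p • choi Φ + (1 - p) • pt (choi Φ)).PosSemidef) :
    ∃ (k : ℕ) (A : Fin k → Matrix (Fin n) (Fin m) ℝ)
      (Ψ : Matrix (Fin m) (Fin m) ℝ →ₗ[ℝ] Matrix (Fin n) (Fin n) ℝ),
      (∀ X : Matrix (Fin m) (Fin m) ℝ, X.IsSymm → Ψ X = 0) ∧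
      (∀ X : Matrix (Fin m) (Fin m) ℝ, Φ X = (∑ j, A j * X * (A j)ᵀ) + Ψ X) ∧
      (∀ X : Matrix (Fin m) (Fin m) ℝ, X.PosSemidef → (Φ X).PosSemidef) := by
  classical
  set T : Matrix (Fin m) (Fin m) ℝ →ₗ[ℝ] Matrix (Fin m) (Fin m) ℝ :=
    { toFun := fun X => Xᵀ, map_add' := fun _ _ => rfl, map_smul' := fun _ _ => rfl } with hT
  set Φ' : Matrix (Fin m) (Fin m) ℝ →ₗ[ℝ] Matrix (Fin n) (Fin n) ℝ :=
    p • Φ + (1 - p) • (Φ ∘ₗ T) with hΦ'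
  -- the Choi matrix of Φ' is the given PSD matrix
  have hchoi : choi Φ' = p • choi Φ + (1 - p) • pt (choi Φ) := by
    ext ⟨i, s⟩ ⟨k, t⟩
    have h1 : Φ ((Matrix.single i k (1:ℝ))ᵀ) s t
        = Φ (Matrix.single i k (1:ℝ)) t s := by
      rw [hΦ]; rfl
    simp only [choi, pt, Matrix.of_apply, Matrix.add_apply, Matrix.smul_apply, hΦ', hT,
      LinearMap.add_apply, LinearMap.smul_apply, LinearMap.comp_apply, LinearMap.coe_mk,
      AddHom.coe_mk, smul_eq_mul]
    rw [← h1]; rfl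
  obtain ⟨B, hB⟩ : ∃ B : Matrix (Fin m × Fin n) (Fin m × Fin n) ℝ, choi Φ' = Bᴴ * B := by
    open scoped MatrixOrder in
    exact ⟨CFC.sqrt (choi Φ'), by
      rw [(CFC.sqrt_nonneg (choi Φ')).posSemidef.1.eq,
        CFC.sqrt_mul_sqrt_self _ (hchoi ▸ h).nonneg]⟩
  set A : Fin m × Fin n → Matrix (Fin n) (Fin m) ℝ :=
    fun j => Matrix.of fun s i => B j (i, s) with hA
  -- Kraus decomposition of Φ'
  have key : ∀ X : Matrix (Fin m) (Fin m) ℝ,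
      Φ' X = ∑ j : Fin m × Fin n, A j * X * (A j)ᵀ := by
    intro X
    ext s t
    have hXsum : Φ' X = ∑ i : Fin m, ∑ k : Fin m, X i k • Φ' (Matrix.single i k 1) := by
      conv_lhs => rw [Matrix.matrix_eq_sum_single X]
      rw [map_sum]
      refine Finset.sum_congr rfl fun i _ => ?_
      rw [map_sum]
      refine Finset.sum_congr rfl fun k _ => ?_
      rw [show Matrix.single i k (X i k) = X i k • Matrix.single i k (1:ℝ) by
        simp, LinearMap.map_smul]
    have hentry : ∀ (i k : Fin m), Φ' (Matrix.single i k 1) s t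
        = ∑ j : Fin m × Fin n, B j (i, s) * B j (k, t) := by
      intro i k
      have h2 : Φ' (Matrix.single i k 1) s t = choi Φ' (i, s) (k, t) := rfl
      rw [h2, hB, Matrix.mul_apply]
      simp [Matrix.conjTranspose_apply]
    have lhs_eq : Φ' X s t
        = ∑ j : Fin m × Fin n, ∑ i : Fin m, ∑ k : Fin m,
            B j (i, s) * X i k * B j (k, t) := by
      rw [hXsum]
      simp only [Matrix.sum_apply, Matrix.smul_apply, smul_eq_mul]
      rw [← sum3_comm (fun i k j => B j (i, s) * X i k * B j (k, t))]
      refine Finset.sum_congr rfl fun i _ => Finset.sum_congr rfl fun k _ => ?_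
      rw [hentry i k, Finset.mul_sum]
      exact Finset.sum_congr rfl fun j _ => by ring
    rw [Matrix.sum_apply, lhs_eq]
    refine Finset.sum_congr rfl fun j _ => ?_
    simp only [Matrix.mul_apply, Matrix.transpose_apply, hA, Matrix.of_apply, Finset.sum_mul]
    rw [Finset.sum_comm]
  refine ⟨m * n, fun j => A (finProdFinEquiv.symm j), Φ - Φ', ?_, ?_, ?_⟩
  · intro X hX
    simp only [LinearMap.sub_apply, hΦ', LinearMap.add_apply, LinearMap.smul_apply,
      LinearMap.comp_apply, hT, LinearMap.coe_mk, AddHom.coe_mk, hX.eq]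
    simp only [show ∀ Y : Matrix (Fin m) (Fin m) ℝ,
        ({ toFun := fun X => Xᵀ, map_add' := fun _ _ => rfl, map_smul' := fun _ _ => rfl } :
        Matrix (Fin m) (Fin m) ℝ →ₗ[ℝ] Matrix (Fin m) (Fin m) ℝ) Y = Yᵀ from fun _ => rfl, hX.eq]
    module
  · intro X
    rw [Equiv.sum_comp finProdFinEquiv.symm (fun j => A j * X * (A j)ᵀ), ← key X]
    simp
  · intro X hX
    have hsymm : X.IsSymm := by
      have := hX.1
      rwa [Matrix.IsHermitian, Matrix.conjTranspose_eq_transpose_of_trivial] at this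
    have hΦX : Φ X = Φ' X := by
      simp only [hΦ', LinearMap.add_apply, LinearMap.smul_apply, LinearMap.comp_apply, hT,
        LinearMap.coe_mk, AddHom.coe_mk, hsymm.eq]
      simp only [show ∀ Y : Matrix (Fin m) (Fin m) ℝ,
        ({ toFun := fun X => Xᵀ, map_add' := fun _ _ => rfl, map_smul' := fun _ _ => rfl } :
        Matrix (Fin m) (Fin m) ℝ →ₗ[ℝ] Matrix (Fin m) (Fin m) ℝ) Y = Yᵀ from fun _ => rfl, hsymm.eq]
      module
    rw [hΦX, key X]
    refine Finset.sum_induction _ Matrix.PosSemidef (fun a b ha hb => ha.add hb)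
      Matrix.PosSemidef.zero (fun j _ => ?_)
    have := hX.mul_mul_conjTranspose_same (A j)
    rwa [Matrix.conjTranspose_eq_transpose_of_trivial] at this
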